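/- The d-divisible Dowling lattice Q_n(r,d) is a pure lattice with rank function rk((I,π,γ)) = ⌊n/d⌋ + 1 − |π| for elements above the artificially adjoined minimum 0̂, and rk(0̂) = 0. -/

import Mathlib

/-- An element of the Dowling lattice `Q_n(μ_r)`: an equivalence class of `μ_r`-labelled
partial partitions of `{1, ..., n}`.  It is encoded by its zero block `zero`, the
"same nonzero block" relation `rel` (an equivalence relation on the complement of `zero`),
and the relative labelling `lab i j = γ(i)⁻¹ γ(j) ∈ μ_r` for `i, j` in a common nonzero
block (normalised to `1` for unrelated pairs); this data is exactly an equivalence class of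
`G`-prepartitions `(I, π, γ)` for `G = μ_r`. -/
structure DowlingElt (n r : ℕ) where
  zero : Set (Fin n)
  rel : Fin n → Fin n → Prop
  lab : Fin n → Fin n → ℂ
  rel_compl : ∀ i j, rel i j → i ∉ zero ∧ j ∉ zero
  rel_refl : ∀ i, i ∉ zero → rel i i
  rel_symm : ∀ i j, rel i j → rel j i
  rel_trans : ∀ i j k, rel i j → rel j k → rel i k
  lab_root : ∀ i j, lab i j ^ r = 1
  lab_one : ∀ i j, ¬ rel i j → lab i j = 1
  lab_refl : ∀ i, lab i i = 1
  lab_symm : ∀ i j, rel i j → lab i j * lab j i = 1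
  lab_cocycle : ∀ i j k, rel i j → rel j k → lab i k = lab i j * lab j k

/-- The partial order of the Dowling lattice `Q_n(r)`: `x ≤ y` iff `y` is obtained from `x`
by merges, i.e. the zero block grows, and each nonzero block of `x` is either absorbed into
the zero block of `y` or contained (with compatible labels) in a nonzero block of `y`. -/
instance DowlingElt.instPreorder (n r : ℕ) : Preorder (DowlingElt n r) where
  le x y := x.zero ⊆ y.zero ∧
    ∀ i j, x.rel i j → (i ∈ y.zero ∧ j ∈ y.zero) ∨ (y.rel i j ∧ y.lab i j = x.lab i j)
  le_refl x := ⟨subset_rfl, fun i j h => Or.inr ⟨h, rfl⟩⟩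
  le_trans x y z h1 h2 := by
    refine ⟨h1.1.trans h2.1, fun i j h => ?_⟩
    rcases h1.2 i j h with hi | ⟨hr, hl⟩
    · exact Or.inl ⟨h2.1 hi.1, h2.1 hi.2⟩
    · rcases h2.2 i j hr with hi | ⟨hr', hl'⟩
      · exact Or.inl hi
      · exact Or.inr ⟨hr', hl'.trans hl⟩


/-- The number of nonzero blocks `|π|` of a Dowling lattice element. -/
noncomputable def nblocks {n r : ℕ} (x : DowlingElt n r) : ℕ :=
  Nat.card {B : Set (Fin n) // ∃ i, i ∉ x.zero ∧ B = {j | x.rel i j}}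

/-- `d`-divisibility: every nonzero block has size divisible by `d`. -/
def DDiv {n r : ℕ} (d : ℕ) (x : DowlingElt n r) : Prop :=
  ∀ i, i ∉ x.zero → d ∣ Nat.card {j : Fin n // x.rel i j}

/-- The `d`-divisible Dowling lattice `Q_n(r, d)`: the elements of `Q_n(r)` all of whose
nonzero blocks have size divisible by `d`, together with an adjoined minimum `⊥`
(the minimum `0̂` of `Q_n(r)`). -/
abbrev QnRD (n r d : ℕ) := WithBot {x : DowlingElt n r // DDiv d x}

/-- The rank function of `Q_n(r, d)`: `0` on `0̂` and `⌊n/d⌋ + 1 - |π|` otherwise. -/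
noncomputable def rkd {n r : ℕ} (d : ℕ) : QnRD n r d → ℤ :=
  WithBot.recBotCoe 0 (fun x => ((n / d : ℕ) : ℤ) + 1 - nblocks x.1)


set_option maxHeartbeats 1000000

noncomputable section
open Classical Finset

namespace DowlingElt

variable {n r : ℕ}

lemma le_def {x y : DowlingElt n r} : x ≤ y ↔ (x.zero ⊆ y.zero ∧
    ∀ i j, x.rel i j → (i ∈ y.zero ∧ j ∈ y.zero) ∨ (y.rel i j ∧ y.lab i j = x.lab i j)) :=
  Iff.rfl

lemma rel_left {x : DowlingElt n r} {i j : Fin n} (h : x.rel i j) : i ∉ x.zero :=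
  (x.rel_compl i j h).1

lemma rel_right {x : DowlingElt n r} {i j : Fin n} (h : x.rel i j) : j ∉ x.zero :=
  (x.rel_compl i j h).2

/-- The nonzero block of `i` as a finset. -/
def fblock (x : DowlingElt n r) (i : Fin n) : Finset (Fin n) :=
  Finset.univ.filter (fun j => x.rel i j)

lemma mem_fblock {x : DowlingElt n r} {i j : Fin n} : j ∈ x.fblock i ↔ x.rel i j := by
  simp [fblock]

lemma self_mem_fblock {x : DowlingElt n r} {i : Fin n} (h : i ∉ x.zero) : i ∈ x.fblock i :=
  mem_fblock.2 (x.rel_refl i h)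

lemma fblock_eq_of_rel {x : DowlingElt n r} {i j : Fin n} (h : x.rel i j) :
    x.fblock i = x.fblock j := by
  ext k
  simp only [mem_fblock]
  exact ⟨fun hk => x.rel_trans j i k (x.rel_symm i j h) hk,
    fun hk => x.rel_trans i j k h hk⟩

lemma fblock_eq_of_mem {x : DowlingElt n r} {i j k : Fin n}
    (h : k ∈ x.fblock i) (h' : k ∈ x.fblock j) : x.fblock i = x.fblock j := by
  rw [fblock_eq_of_rel (mem_fblock.1 h), ← fblock_eq_of_rel (mem_fblock.1 h')]

/-- The set of non-zero-block elements. -/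
def nzs (x : DowlingElt n r) : Finset (Fin n) :=
  Finset.univ.filter (fun i => i ∉ x.zero)

lemma mem_nzs {x : DowlingElt n r} {i : Fin n} : i ∈ x.nzs ↔ i ∉ x.zero := by simp [nzs]

/-- The set of nonzero blocks, as a finset. -/
def bfin (x : DowlingElt n r) : Finset (Finset (Fin n)) := x.nzs.image x.fblock

lemma mem_bfin {x : DowlingElt n r} {B : Finset (Fin n)} :
    B ∈ x.bfin ↔ ∃ i, i ∉ x.zero ∧ B = x.fblock i := by
  simp only [bfin, Finset.mem_image, mem_nzs]
  exact ⟨fun ⟨i, hi, h⟩ => ⟨i, hi, h.symm⟩, fun ⟨i, hi, h⟩ => ⟨i, hi, h.symm⟩⟩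

lemma mem_of_mem_bfin {x : DowlingElt n r} {B : Finset (Fin n)} (hB : B ∈ x.bfin)
    {t : Fin n} (ht : t ∈ B) : t ∉ x.zero ∧ B = x.fblock t := by
  obtain ⟨i, hi, rfl⟩ := mem_bfin.1 hB
  exact ⟨rel_right (mem_fblock.1 ht), fblock_eq_of_rel (mem_fblock.1 ht)⟩

lemma card_subtype_eq_fblock_card (x : DowlingElt n r) (i : Fin n) :
    Nat.card {j : Fin n // x.rel i j} = (x.fblock i).card := by
  have : {j : Fin n | x.rel i j} = ↑(x.fblock i) := by ext j; simp [mem_fblock]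
  have h2 : Nat.card {j : Fin n // x.rel i j} = Set.ncard {j : Fin n | x.rel i j} :=
    Nat.card_coe_set_eq _
  rw [h2, this, Set.ncard_coe_finset]

lemma nblocks_eq_bfin_card (x : DowlingElt n r) : nblocks x = x.bfin.card := by
  have h1 : {B : Set (Fin n) | ∃ i, i ∉ x.zero ∧ B = {j | x.rel i j}} =
      (fun t : Finset (Fin n) => (↑t : Set (Fin n))) '' ↑x.bfin := by
    ext B
    simp only [Set.mem_setOf_eq, Set.mem_image, Finset.mem_coe, mem_bfin]
    constructor
    · rintro ⟨i, hi, rfl⟩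
      exact ⟨x.fblock i, ⟨i, hi, rfl⟩, by ext j; simp [mem_fblock]⟩
    · rintro ⟨t, ⟨i, hi, rfl⟩, rfl⟩
      exact ⟨i, hi, by ext j; simp [mem_fblock]⟩
  have h2 : nblocks x = Set.ncard {B : Set (Fin n) | ∃ i, i ∉ x.zero ∧ B = {j | x.rel i j}} :=
    (Nat.card_coe_set_eq _).symm
  rw [h2, h1, Set.ncard_image_of_injective _ Finset.coe_injective, Set.ncard_coe_finset]

end DowlingElt

noncomputable section
open Classical Finset

namespace DowlingElt

variable {n r : ℕ}

/-- A set closed under `x.rel` and avoiding `x.zero` decomposes into blocks. -/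
lemma card_eq_sum_blocks (x : DowlingElt n r) (s : Finset (Fin n))
    (hz : ∀ j ∈ s, j ∉ x.zero) (hcl : ∀ j ∈ s, ∀ k, x.rel j k → k ∈ s) :
    s.card = ∑ B ∈ s.image x.fblock, B.card := by
  rw [Finset.card_eq_sum_card_image x.fblock s]
  refine Finset.sum_congr rfl fun B hB => ?_
  obtain ⟨j, hj, rfl⟩ := Finset.mem_image.1 hB
  congr 1
  ext k
  simp only [Finset.mem_filter]
  constructor
  · rintro ⟨hk, hfe⟩
    rw [← hfe]
    exact self_mem_fblock (hz k hk)
  · intro hk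
    have hrel : x.rel j k := mem_fblock.1 hk
    exact ⟨hcl j hj k hrel, (fblock_eq_of_rel hrel).symm⟩

lemma blocks_card_dvd {d : ℕ} {x : DowlingElt n r} (hx : DDiv d x) {B : Finset (Fin n)}
    (hB : B ∈ x.bfin) : d ∣ B.card := by
  obtain ⟨i, hi, rfl⟩ := mem_bfin.1 hB
  rw [← card_subtype_eq_fblock_card]
  exact hx i hi

/-- A set closed under `x.rel` and avoiding `x.zero` has `d`-divisible cardinality. -/
lemma dvd_card_of_closed {d : ℕ} {x : DowlingElt n r} (hx : DDiv d x) (s : Finset (Fin n))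
    (hz : ∀ j ∈ s, j ∉ x.zero) (hcl : ∀ j ∈ s, ∀ k, x.rel j k → k ∈ s) :
    d ∣ s.card := by
  rw [card_eq_sum_blocks x s hz hcl]
  refine Finset.dvd_sum fun B hB => ?_
  obtain ⟨j, hj, rfl⟩ := Finset.mem_image.1 hB
  rw [← card_subtype_eq_fblock_card]
  exact hx j (hz j hj)

/-- `DDiv` is upward closed. -/
lemma DDiv_of_le {d : ℕ} {x y : DowlingElt n r} (h : x ≤ y) (hx : DDiv d x) : DDiv d y := by
  intro i hi
  rw [card_subtype_eq_fblock_card]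
  refine dvd_card_of_closed hx (y.fblock i) (fun j hj => fun hjz => ?_) (fun j hj k hk => ?_)
  · exact rel_right (mem_fblock.1 hj) (h.1 hjz)
  · have hj' : y.rel i j := mem_fblock.1 hj
    rcases h.2 j k hk with ⟨hjz, _⟩ | ⟨hr, _⟩
    · exact absurd hjz (rel_right hj')
    · exact mem_fblock.2 (y.rel_trans i j k hj' hr)

lemma nzs_card_eq (x : DowlingElt n r) (hall : ∀ B ∈ x.bfin, B.card = d) :
    x.nzs.card = d * x.bfin.card := by
  have h := card_eq_sum_blocks x x.nzs (fun j hj => mem_nzs.1 hj)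
    (fun j hj k hk => mem_nzs.2 (rel_right hk))
  rw [h, show x.nzs.image x.fblock = x.bfin from rfl,
    Finset.sum_congr rfl (fun B hB => hall B hB), Finset.sum_const, smul_eq_mul, mul_comm]

lemma nzs_card_add (x : DowlingElt n r) : x.nzs.card + Set.ncard x.zero = n := by
  classical
  have hz : Set.ncard x.zero = (Finset.univ.filter (fun i => i ∈ x.zero)).card := by
    rw [← Set.ncard_coe_finset]
    congr 1
    ext i; simp
  rw [hz, nzs]
  have := Finset.card_filter_add_card_filter_not
    (s := (Finset.univ : Finset (Fin n))) (p := fun i => i ∉ x.zero)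
  rw [show (Finset.univ.filter (fun i => ¬ i ∉ x.zero)) =
      (Finset.univ.filter (fun i => i ∈ x.zero)) from by ext i; simp] at this
  rw [this, Finset.card_univ, Fintype.card_fin]

end DowlingElt

noncomputable section
open Classical Finset

namespace DowlingElt

variable {n r : ℕ}

lemma block_subset_of_le {x y : DowlingElt n r} (h : x ≤ y) {i : Fin n} (hi : i ∉ y.zero) :
    x.fblock i ⊆ y.fblock i := by
  intro k hk
  rcases h.2 i k (mem_fblock.1 hk) with ⟨hiz, _⟩ | ⟨hr, _⟩
  · exact absurd hiz hi
  · exact mem_fblock.2 hr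

lemma block_absorbed_of_le {x y : DowlingElt n r} (h : x ≤ y) {i : Fin n} (hi : i ∈ y.zero) :
    ∀ k ∈ x.fblock i, k ∈ y.zero := by
  intro k hk
  rcases h.2 i k (mem_fblock.1 hk) with ⟨_, hkz⟩ | ⟨hr, _⟩
  · exact hkz
  · exact absurd hi (rel_left hr)

/-- Representative-based map from blocks of `y` to blocks of `x`. -/
def repmap (x : DowlingElt n r) (B : Finset (Fin n)) : Finset (Fin n) :=
  if h : B.Nonempty then x.fblock h.choose else ∅

lemma repmap_spec {x y : DowlingElt n r} (h : x ≤ y) {B : Finset (Fin n)} (hB : B ∈ y.bfin) :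
    ∃ c, c ∈ B ∧ c ∉ y.zero ∧ c ∉ x.zero ∧ repmap x B = x.fblock c ∧
      x.repmap B ⊆ B ∧ c ∈ x.repmap B ∧ x.repmap B ∈ x.bfin := by
  obtain ⟨i, hi, rfl⟩ := mem_bfin.1 hB
  have hne : (y.fblock i).Nonempty := ⟨i, self_mem_fblock hi⟩
  set c := hne.choose with hc
  have hcB : c ∈ y.fblock i := hne.choose_spec
  have hcz : c ∉ y.zero := rel_right (mem_fblock.1 hcB)
  have hcx : c ∉ x.zero := fun hx => hcz (h.1 hx)
  have hrm : repmap x (y.fblock i) = x.fblock c := dif_pos hne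
  have hsub : x.repmap (y.fblock i) ⊆ y.fblock i := by
    rw [hrm, fblock_eq_of_rel (mem_fblock.1 hcB)]
    exact block_subset_of_le h hcz
  exact ⟨c, hcB, hcz, hcx, hrm, hsub, by rw [hrm]; exact self_mem_fblock hcx,
    mem_bfin.2 ⟨c, hcx, hrm ▸ rfl⟩⟩

/-- `repmap` is injective on blocks of `y` and lands in non-absorbed blocks of `x`. -/
lemma repmap_injOn {x y : DowlingElt n r} (h : x ≤ y) :
    Set.InjOn (repmap x) ↑y.bfin := by
  intro B hB B' hB' he
  obtain ⟨c, hcB, _, _, _, hsub, hcm, _⟩ := repmap_spec h (Finset.mem_coe.1 hB)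
  obtain ⟨c', hcB', _, _, _, hsub', hcm', _⟩ := repmap_spec h (Finset.mem_coe.1 hB')
  have h1 : c ∈ B := hcB
  have h2 : c ∈ B' := hsub' (he ▸ hcm)
  obtain ⟨i, hi, rfl⟩ := mem_bfin.1 (Finset.mem_coe.1 hB)
  obtain ⟨i', hi', rfl⟩ := mem_bfin.1 (Finset.mem_coe.1 hB')
  exact fblock_eq_of_mem h1 h2

lemma repmap_mem_rest {x y : DowlingElt n r} (h : x ≤ y) {B : Finset (Fin n)}
    (hB : B ∈ y.bfin) :
    repmap x B ∈ x.bfin.filter (fun C => ¬ ∀ t ∈ C, t ∈ y.zero) := by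
  obtain ⟨c, _, hcz, hcx, hrm, _, hcm, hmem⟩ := repmap_spec h hB
  exact Finset.mem_filter.2 ⟨hmem, fun hall => hcz (hall c hcm)⟩

lemma bfin_card_le_rest {x y : DowlingElt n r} (h : x ≤ y) :
    y.bfin.card ≤ (x.bfin.filter (fun C => ¬ ∀ t ∈ C, t ∈ y.zero)).card :=
  Finset.card_le_card_of_injOn (repmap x) (fun B hB => repmap_mem_rest h hB) (repmap_injOn h)

lemma bfin_mono {x y : DowlingElt n r} (h : x ≤ y) : y.bfin.card ≤ x.bfin.card :=
  (bfin_card_le_rest h).trans (Finset.card_le_card (Finset.filter_subset _ _))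

end DowlingElt

noncomputable section
open Classical Finset

namespace DowlingElt

variable {n r : ℕ}

lemma not_rel_of_not_le {x y : DowlingElt n r} (h : x ≤ y) (h2 : ¬ y ≤ x)
    (hz : y.zero ⊆ x.zero) :
    ∃ i j, y.rel i j ∧ ¬ x.rel i j ∧ i ∉ y.zero ∧ j ∉ y.zero ∧ i ∉ x.zero ∧ j ∉ x.zero := by
  rw [le_def] at h2
  push_neg at h2
  obtain ⟨i, j, hrel, hne⟩ := h2 hz
  have hiy : i ∉ y.zero := rel_left hrel
  have hjy : j ∉ y.zero := rel_right hrel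
  have hix : i ∉ x.zero := fun hx => hiy (h.1 hx)
  have hjx : j ∉ x.zero := fun hx => hjy (h.1 hx)
  refine ⟨i, j, hrel, fun hxr => ?_, hiy, hjy, hix, hjx⟩
  rcases h.2 i j hxr with ⟨hiz, _⟩ | ⟨_, hl⟩
  · exact hiy hiz
  · exact hne.2 hxr hl.symm

lemma bfin_strict_mono {x y : DowlingElt n r} (h : x ≤ y) (h2 : ¬ y ≤ x) :
    y.bfin.card < x.bfin.card := by
  by_cases hz : y.zero ⊆ x.zero
  · -- no absorbed block; find two x-blocks inside one y-block
    obtain ⟨i, j, hrel, hxr, hiy, hjy, hix, hjx⟩ := not_rel_of_not_le h h2 hz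
    set rest := x.bfin.filter (fun C => ¬ ∀ t ∈ C, t ∈ y.zero) with hrest
    set img := y.bfin.image (repmap x) with himg
    have himgsub : img ⊆ rest := by
      intro C hC
      obtain ⟨B, hB, rfl⟩ := Finset.mem_image.1 hC
      exact repmap_mem_rest h hB
    have hC1 : x.fblock i ∈ rest := Finset.mem_filter.2
      ⟨mem_bfin.2 ⟨i, hix, rfl⟩, fun hall => hiy (hall i (self_mem_fblock hix))⟩
    have hC2 : x.fblock j ∈ rest := Finset.mem_filter.2
      ⟨mem_bfin.2 ⟨j, hjx, rfl⟩, fun hall => hjy (hall j (self_mem_fblock hjx))⟩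
    have hmiss : x.fblock i ∉ img ∨ x.fblock j ∉ img := by
      by_contra hcon
      push_neg at hcon
      obtain ⟨B, hB, hBe⟩ := Finset.mem_image.1 hcon.1
      obtain ⟨B', hB', hBe'⟩ := Finset.mem_image.1 hcon.2
      obtain ⟨c, _, _, _, _, hsubB, _, _⟩ := repmap_spec h hB
      obtain ⟨c', _, _, _, _, hsubB', _, _⟩ := repmap_spec h hB'
      have hiB : i ∈ B := hsubB (hBe ▸ self_mem_fblock hix)
      have hjB' : j ∈ B' := hsubB' (hBe' ▸ self_mem_fblock hjx)
      have hBi : B = y.fblock i := (mem_of_mem_bfin hB hiB).2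
      have hBj : B' = y.fblock j := (mem_of_mem_bfin hB' hjB').2
      have : B = B' := by rw [hBi, hBj, fblock_eq_of_rel hrel]
      have : x.fblock i = x.fblock j := by rw [← hBe, ← hBe', this]
      exact hxr (x.rel_symm j i (mem_fblock.1 (this ▸ self_mem_fblock hix)))
    have hss : img ⊂ rest := by
      refine ⟨himgsub, fun hsub => ?_⟩
      rcases hmiss with hm | hm
      · exact hm (hsub hC1)
      · exact hm (hsub hC2)
    calc y.bfin.card = img.card := (Finset.card_image_of_injOn (repmap_injOn h)).symm
      _ < rest.card := Finset.card_lt_card hss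
      _ ≤ x.bfin.card := Finset.card_le_card (Finset.filter_subset _ _)
  · -- some absorbed block exists
    rw [Set.not_subset] at hz
    obtain ⟨t, hty, htx⟩ := hz
    set rest := x.bfin.filter (fun C => ¬ ∀ t ∈ C, t ∈ y.zero) with hrest
    have hC : x.fblock t ∈ x.bfin := mem_bfin.2 ⟨t, htx, rfl⟩
    have hCabs : x.fblock t ∉ rest := by
      intro hmem
      exact (Finset.mem_filter.1 hmem).2 (block_absorbed_of_le h hty)
    have hss : rest ⊂ x.bfin := ⟨Finset.filter_subset _ _, fun hsub => hCabs (hsub hC)⟩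
    exact lt_of_le_of_lt (bfin_card_le_rest h) (Finset.card_lt_card hss)

lemma bfin_lt_of_lt {x y : DowlingElt n r} (h : x < y) : y.bfin.card < x.bfin.card :=
  bfin_strict_mono h.le (fun h2 => absurd h2 (lt_iff_le_not_ge.1 h).2)

lemma lt_of_card_gt {x y : DowlingElt n r} (h : x ≤ y) (hc : y.bfin.card < x.bfin.card) :
    x < y :=
  lt_iff_le_not_ge.2 ⟨h, fun h2 => absurd (bfin_mono h2) (not_le.2 hc)⟩

end DowlingElt

noncomputable section
open Classical Finset

namespace DowlingElt

variable {n r : ℕ}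

/-- Absorb the nonzero block of `i₀` into the zero block. -/
def absorb (x : DowlingElt n r) (i₀ : Fin n) : DowlingElt n r where
  zero := x.zero ∪ {j | x.rel i₀ j}
  rel i j := x.rel i j ∧ ¬ x.rel i₀ i
  lab i j := if x.rel i j ∧ ¬ x.rel i₀ i then x.lab i j else 1
  rel_compl i j h := by
    refine ⟨fun hi => ?_, fun hj => ?_⟩
    · rcases hi with hi | hi
      · exact rel_left h.1 hi
      · exact h.2 hi
    · rcases hj with hj | hj
      · exact rel_right h.1 hj
      · exact h.2 (x.rel_trans i₀ j i hj (x.rel_symm i j h.1))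
  rel_refl i hi := by
    simp only [Set.mem_union, Set.mem_setOf_eq, not_or] at hi
    exact ⟨x.rel_refl i hi.1, hi.2⟩
  rel_symm i j h := ⟨x.rel_symm i j h.1, fun hz => h.2 (x.rel_trans i₀ j i hz (x.rel_symm i j h.1))⟩
  rel_trans i j k h h' := ⟨x.rel_trans i j k h.1 h'.1, h.2⟩
  lab_root i j := by split <;> simp [DowlingElt.lab_root, one_pow]
  lab_one i j h := if_neg h
  lab_refl i := by split <;> simp [DowlingElt.lab_refl]
  lab_symm i j h := by
    rw [if_pos h, if_pos ⟨x.rel_symm i j h.1,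
      fun hz => h.2 (x.rel_trans i₀ j i hz (x.rel_symm i j h.1))⟩]
    exact x.lab_symm i j h.1
  lab_cocycle i j k h h' := by
    rw [if_pos ⟨x.rel_trans i j k h.1 h'.1, h.2⟩, if_pos h, if_pos h']
    exact x.lab_cocycle i j k h.1 h'.1

lemma absorb_zero (x : DowlingElt n r) (i₀ : Fin n) :
    (x.absorb i₀).zero = x.zero ∪ {j | x.rel i₀ j} := rfl

lemma le_absorb (x : DowlingElt n r) (i₀ : Fin n) : x ≤ x.absorb i₀ := by
  refine ⟨fun i hi => Or.inl hi, fun i j h => ?_⟩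
  by_cases hc : x.rel i₀ i
  · exact Or.inl ⟨Or.inr hc, Or.inr (x.rel_trans i₀ i j hc h)⟩
  · exact Or.inr ⟨⟨h, hc⟩, if_pos ⟨h, hc⟩⟩

lemma lt_absorb (x : DowlingElt n r) {i₀ : Fin n} (hi₀ : i₀ ∉ x.zero) : x < x.absorb i₀ := by
  refine lt_iff_le_not_ge.2 ⟨le_absorb x i₀, fun h => ?_⟩
  exact hi₀ (h.1 (Or.inr (x.rel_refl i₀ hi₀)))

lemma absorb_le {x b : DowlingElt n r} (h : x ≤ b) {i₀ : Fin n}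
    (habs : ∀ k, x.rel i₀ k → k ∈ b.zero) : x.absorb i₀ ≤ b := by
  constructor
  · rintro i (hi | hi)
    · exact h.1 hi
    · exact habs i hi
  · rintro i j ⟨hrel, hni⟩
    exact h.2 i j hrel |>.imp id (fun ⟨hr, hl⟩ => ⟨hr, hl.trans (if_pos ⟨hrel, hni⟩).symm⟩)

lemma DDiv_absorb {d : ℕ} {x : DowlingElt n r} (hx : DDiv d x) (i₀ : Fin n) :
    DDiv d (x.absorb i₀) := by
  intro i hi
  rw [absorb_zero, Set.mem_union] at hi
  push_neg at hi
  have : {j : Fin n | (x.absorb i₀).rel i j} = {j : Fin n | x.rel i j} := by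
    ext j
    exact ⟨fun h => h.1, fun h => ⟨h, hi.2⟩⟩
  have hcc : Nat.card {j : Fin n // (x.absorb i₀).rel i j} =
      Nat.card {j : Fin n // x.rel i j} := by
    rw [show {j : Fin n // (x.absorb i₀).rel i j} = {j : Fin n // x.rel i j} from by rw [
      show (fun j => (x.absorb i₀).rel i j) = (fun j => x.rel i j) from funext fun j =>
        propext ⟨fun h => h.1, fun h => ⟨h, hi.2⟩⟩]]
  rw [hcc]
  exact hx i hi.1

end DowlingElt

noncomputable section
open Classical Finset

namespace DowlingElt

variable {n r : ℕ}

/-- Carve a new nonzero block `N` out of the zero block of `b`. -/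
def carve (b : DowlingElt n r) (N : Finset (Fin n)) (hN : ↑N ⊆ b.zero) : DowlingElt n r where
  zero := b.zero \ ↑N
  rel i j := b.rel i j ∨ (i ∈ N ∧ j ∈ N)
  lab i j := if b.rel i j then b.lab i j else 1
  rel_compl i j h := by
    rcases h with h | ⟨hi, hj⟩
    · exact ⟨fun hz => rel_left h hz.1, fun hz => rel_right h hz.1⟩
    · exact ⟨fun hz => hz.2 hi, fun hz => hz.2 hj⟩
  rel_refl i hi := by
    simp only [Set.mem_diff, Finset.mem_coe, not_and, not_not] at hi
    by_cases hz : i ∈ b.zero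
    · exact Or.inr ⟨hi hz, hi hz⟩
    · exact Or.inl (b.rel_refl i hz)
  rel_symm i j h := by
    rcases h with h | ⟨hi, hj⟩
    · exact Or.inl (b.rel_symm i j h)
    · exact Or.inr ⟨hj, hi⟩
  rel_trans i j k h h' := by
    rcases h with h | ⟨hi, hj⟩ <;> rcases h' with h' | ⟨hj', hk⟩
    · exact Or.inl (b.rel_trans i j k h h')
    · exact absurd (hN hj') (rel_right h)
    · exact absurd (hN hj) (rel_left h')
    · exact Or.inr ⟨hi, hk⟩
  lab_root i j := by split <;> simp [DowlingElt.lab_root]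
  lab_one i j h := by
    rw [if_neg (fun hb => h (Or.inl hb))]
  lab_refl i := by split <;> simp [DowlingElt.lab_refl]
  lab_symm i j h := by
    by_cases hb : b.rel i j
    · rw [if_pos hb, if_pos (b.rel_symm i j hb)]
      exact b.lab_symm i j hb
    · rw [if_neg hb, if_neg (fun hb' => hb (b.rel_symm j i hb')), one_mul]
  lab_cocycle i j k h h' := by
    rcases h with h | ⟨hi, hj⟩ <;> rcases h' with h' | ⟨hj', hk⟩
    · rw [if_pos h, if_pos h', if_pos (b.rel_trans i j k h h')]
      exact b.lab_cocycle i j k h h'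
    · exact absurd (hN hj') (rel_right h)
    · exact absurd (hN hj) (rel_left h')
    · rw [if_neg (fun hb => rel_left hb (hN hi)), if_neg (fun hb => rel_left hb (hN hi)),
        if_neg (fun hb => rel_left hb (hN hj)), one_mul]

lemma carve_le (b : DowlingElt n r) (N : Finset (Fin n)) (hN : ↑N ⊆ b.zero) :
    b.carve N hN ≤ b := by
  refine ⟨fun i hi => hi.1, fun i j h => ?_⟩
  rcases h with h | ⟨hi, hj⟩
  · exact Or.inr ⟨h, (if_pos h).symm⟩
  · exact Or.inl ⟨hN hi, hN hj⟩

lemma carve_lt (b : DowlingElt n r) (N : Finset (Fin n)) (hN : ↑N ⊆ b.zero)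
    (hne : N.Nonempty) : b.carve N hN < b := by
  refine lt_iff_le_not_ge.2 ⟨carve_le b N hN, fun h => ?_⟩
  obtain ⟨t, ht⟩ := hne
  exact (h.1 (hN ht)).2 ht

lemma DDiv_carve {d : ℕ} {b : DowlingElt n r} (hb : DDiv d b) (N : Finset (Fin n))
    (hN : ↑N ⊆ b.zero) (hcard : N.card = d) : DDiv d (b.carve N hN) := by
  intro i hi
  rw [card_subtype_eq_fblock_card]
  by_cases hiN : i ∈ N
  · have : (b.carve N hN).fblock i = N := by
      ext j
      simp only [mem_fblock]
      constructor
      · rintro (h | ⟨_, hj⟩)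
        · exact absurd (hN hiN) (rel_left h)
        · exact hj
      · intro hj; exact Or.inr ⟨hiN, hj⟩
    rw [this, hcard]
  · have hiz : i ∉ b.zero := by
      intro hz
      exact hi ⟨hz, hiN⟩
    have : (b.carve N hN).fblock i = b.fblock i := by
      ext j
      simp only [mem_fblock]
      constructor
      · rintro (h | ⟨hi', _⟩)
        · exact h
        · exact absurd hi' hiN
      · intro hj; exact Or.inl hj
    rw [this, ← card_subtype_eq_fblock_card]
    exact hb i hiz

/-- Split off the part `N` of a block of `b` as a separate block. -/
def split (b : DowlingElt n r) (N : Finset (Fin n)) : DowlingElt n r where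
  zero := b.zero
  rel i j := b.rel i j ∧ (i ∈ N ↔ j ∈ N)
  lab i j := if i ∈ N ↔ j ∈ N then b.lab i j else 1
  rel_compl i j h := b.rel_compl i j h.1
  rel_refl i hi := ⟨b.rel_refl i hi, Iff.rfl⟩
  rel_symm i j h := ⟨b.rel_symm i j h.1, h.2.symm⟩
  rel_trans i j k h h' := ⟨b.rel_trans i j k h.1 h'.1, h.2.trans h'.2⟩
  lab_root i j := by split <;> simp [DowlingElt.lab_root]
  lab_one i j h := by
    by_cases hiff : i ∈ N ↔ j ∈ N
    · rw [if_pos hiff]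
      exact b.lab_one i j (fun hb => h ⟨hb, hiff⟩)
    · exact if_neg hiff
  lab_refl i := by rw [if_pos Iff.rfl]; exact b.lab_refl i
  lab_symm i j h := by
    rw [if_pos h.2, if_pos h.2.symm]
    exact b.lab_symm i j h.1
  lab_cocycle i j k h h' := by
    rw [if_pos (h.2.trans h'.2), if_pos h.2, if_pos h'.2]
    exact b.lab_cocycle i j k h.1 h'.1

lemma split_le (b : DowlingElt n r) (N : Finset (Fin n)) : b.split N ≤ b :=
  ⟨subset_rfl, fun i j h => Or.inr ⟨h.1, (if_pos h.2).symm⟩⟩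

lemma split_lt (b : DowlingElt n r) {N : Finset (Fin n)} {i₀ : Fin n}
    (hsub : N ⊆ b.fblock i₀) {t u : Fin n} (ht : t ∈ N) (hu : u ∈ b.fblock i₀) (huN : u ∉ N) :
    b.split N < b := by
  refine lt_iff_le_not_ge.2 ⟨split_le b N, fun h => ?_⟩
  have hrel : b.rel t u := b.rel_trans t i₀ u
    (b.rel_symm i₀ t (mem_fblock.1 (hsub ht))) (mem_fblock.1 hu)
  rcases h.2 t u hrel with ⟨hz, _⟩ | ⟨hr, _⟩
  · exact rel_left hrel hz
  · exact huN (hr.2.1 ht)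

lemma DDiv_split {d : ℕ} {b : DowlingElt n r} (hb : DDiv d b) {N : Finset (Fin n)}
    {i₀ : Fin n} (hsub : N ⊆ b.fblock i₀) (hcard : N.card = d) : DDiv d (b.split N) := by
  intro i hi
  rw [card_subtype_eq_fblock_card]
  have hfb : (b.split N).fblock i = if i ∈ N then N else b.fblock i \ N := by
    ext j
    by_cases hiN : i ∈ N
    · rw [if_pos hiN]
      simp only [mem_fblock]
      constructor
      · rintro ⟨_, hiff⟩
        exact hiff.1 hiN
      · intro hj
        have hrel : b.rel i j := b.rel_trans i i₀ j
          (b.rel_symm i₀ i (mem_fblock.1 (hsub hiN))) (mem_fblock.1 (hsub hj))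
        exact ⟨hrel, iff_of_true hiN hj⟩
    · rw [if_neg hiN]
      simp only [mem_fblock, Finset.mem_sdiff]
      constructor
      · rintro ⟨hrel, hiff⟩
        exact ⟨hrel, fun hj => hiN (hiff.2 hj)⟩
      · rintro ⟨hj, hjN⟩
        exact ⟨hj, iff_of_false hiN hjN⟩
  rw [hfb]
  by_cases hiN : i ∈ N
  · rw [if_pos hiN, hcard]
  · rw [if_neg hiN]
    by_cases hblk : i ∈ b.fblock i₀
    · have h1 : N ⊆ b.fblock i := by
        rw [← fblock_eq_of_rel (mem_fblock.1 hblk)]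
        exact hsub
      rw [Finset.card_sdiff_of_subset h1, hcard]
      have h2 : d ∣ (b.fblock i).card := by
        rw [← card_subtype_eq_fblock_card]
        exact hb i hi
      exact Nat.dvd_sub h2 (dvd_refl d)
    · have : b.fblock i \ N = b.fblock i := by
        refine Finset.sdiff_eq_self_of_disjoint (Finset.disjoint_left.2 fun t ht htN => ?_)
        exact hblk (by
          rw [fblock_eq_of_mem (hsub htN) ht]
          exact self_mem_fblock hi)
      rw [this, ← card_subtype_eq_fblock_card]
      exact hb i hi

end DowlingElt

noncomputable section
open Classical Finset

namespace DowlingElt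

variable {n r : ℕ}

lemma natcard_subtype {P : Fin n → Prop} {F : Finset (Fin n)} (h : ∀ j, P j ↔ j ∈ F) :
    Nat.card {j : Fin n // P j} = F.card := by
  have h1 : {j : Fin n | P j} = ↑F := by ext j; simp only [Set.mem_setOf_eq,
    Finset.coe_sort_coe, Finset.mem_coe]; exact h j
  have h2 : Nat.card {j : Fin n // P j} = Set.ncard {j : Fin n | P j} :=
    Nat.card_coe_set_eq _
  rw [h2, h1, Set.ncard_coe_finset]

lemma xcl {x : DowlingElt n r} {a b c : Fin n} (h1 : x.rel a b) (h2 : x.rel a c) :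
    x.rel b c :=
  x.rel_trans b a c (x.rel_symm a b h1) h2

section Merge

variable (x b : DowlingElt n r) (p q : Fin n)

/-- The relation obtained from `x.rel` by merging the blocks of `p` and `q`. -/
def mrel (i j : Fin n) : Prop :=
  x.rel i j ∨ (x.rel p i ∧ x.rel q j) ∨ (x.rel q i ∧ x.rel p j)

variable {x b p q}

lemma mrel_symm {i j : Fin n} (h : mrel x p q i j) : mrel x p q j i := by
  rcases h with h | ⟨h1, h2⟩ | ⟨h1, h2⟩
  · exact Or.inl (x.rel_symm i j h)
  · exact Or.inr (Or.inr ⟨h2, h1⟩)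
  · exact Or.inr (Or.inl ⟨h2, h1⟩)

lemma mrel_compl {i j : Fin n} (h : mrel x p q i j) : i ∉ x.zero ∧ j ∉ x.zero := by
  rcases h with h | ⟨h1, h2⟩ | ⟨h1, h2⟩
  · exact x.rel_compl i j h
  · exact ⟨rel_right h1, rel_right h2⟩
  · exact ⟨rel_right h1, rel_right h2⟩

lemma mrel_trans (hd : ¬ x.rel p q) {i j k : Fin n}
    (h : mrel x p q i j) (h' : mrel x p q j k) : mrel x p q i k := by
  have hdisj : ∀ t, ¬ (x.rel p t ∧ x.rel q t) := fun t ⟨h1, h2⟩ =>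
    hd (x.rel_trans p t q h1 (x.rel_symm q t h2))
  rcases h with h | ⟨h1, h2⟩ | ⟨h1, h2⟩ <;> rcases h' with h' | ⟨h1', h2'⟩ | ⟨h1', h2'⟩
  · exact Or.inl (x.rel_trans i j k h h')
  · exact Or.inr (Or.inl ⟨x.rel_trans p j i h1' (x.rel_symm i j h), h2'⟩)
  · exact Or.inr (Or.inr ⟨x.rel_trans q j i h1' (x.rel_symm i j h), h2'⟩)
  · exact Or.inr (Or.inl ⟨h1, x.rel_trans q j k h2 h'⟩)
  · exact absurd ⟨h1', h2⟩ (hdisj j)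
  · exact Or.inl (xcl h1 h2')
  · exact Or.inr (Or.inr ⟨h1, x.rel_trans p j k h2 h'⟩)
  · exact Or.inl (xcl h1 h2')
  · exact absurd ⟨h2, h1'⟩ (hdisj j)

lemma le_brel (hxb : x ≤ b) {i j : Fin n} (h : x.rel i j) (hi : i ∉ b.zero) :
    b.rel i j ∧ b.lab i j = x.lab i j := by
  rcases hxb.2 i j h with ⟨hz, _⟩ | hr
  · exact absurd hz hi
  · exact hr

lemma mrel_brel (hxb : x ≤ b) (hpq : b.rel p q) {i j : Fin n}
    (h : mrel x p q i j) (hi : i ∉ b.zero) : b.rel i j := by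
  have hp : p ∉ b.zero := rel_left hpq
  have hq : q ∉ b.zero := rel_right hpq
  rcases h with h | ⟨h1, h2⟩ | ⟨h1, h2⟩
  · exact (le_brel hxb h hi).1
  · have b1 : b.rel p i := (le_brel hxb h1 hp).1
    have b2 : b.rel q j := (le_brel hxb h2 hq).1
    exact b.rel_trans i q j (b.rel_trans i p q (b.rel_symm p i b1) hpq) b2
  · have b1 : b.rel q i := (le_brel hxb h1 hq).1
    have b2 : b.rel p j := (le_brel hxb h2 hp).1
    exact b.rel_trans i p j (b.rel_trans i q p (b.rel_symm q i b1) (b.rel_symm p q hpq)) b2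

lemma mrel_zero (hxb : x ≤ b) (hpq : b.rel p q) {i j : Fin n}
    (h : mrel x p q i j) (hi : i ∈ b.zero) : x.rel i j ∧ j ∈ b.zero := by
  have hp : p ∉ b.zero := rel_left hpq
  have hq : q ∉ b.zero := rel_right hpq
  rcases h with h | ⟨h1, h2⟩ | ⟨h1, h2⟩
  · rcases hxb.2 i j h with ⟨_, hz⟩ | ⟨hr, _⟩
    · exact ⟨h, hz⟩
    · exact absurd hi (rel_left hr)
  · exact absurd hi (rel_right ((le_brel hxb h1 hp).1))
  · exact absurd hi (rel_right ((le_brel hxb h1 hq).1))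

variable (x b p q) in
/-- The label function of the merged element. -/
def mlab (i j : Fin n) : ℂ :=
  if x.rel i j then x.lab i j
  else if (x.rel p i ∧ x.rel q j) ∨ (x.rel q i ∧ x.rel p j) then b.lab i j else 1

lemma mlab_eq_b (hxb : x ≤ b) (hpq : b.rel p q) {i j : Fin n}
    (h : mrel x p q i j) (hi : i ∉ b.zero) : mlab x b p q i j = b.lab i j := by
  unfold mlab
  by_cases hx : x.rel i j
  · rw [if_pos hx, (le_brel hxb hx hi).2]
  · rw [if_neg hx, if_pos (h.resolve_left hx)]

lemma mlab_eq_x (hxb : x ≤ b) (hpq : b.rel p q) {i j : Fin n}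
    (h : mrel x p q i j) (hi : i ∈ b.zero) : mlab x b p q i j = x.lab i j := by
  unfold mlab
  rw [if_pos (mrel_zero hxb hpq h hi).1]

/-- Merge the blocks of `p` and `q` in `x`, with labels borrowed from `b`. -/
def mergeAt (hxb : x ≤ b) (hpq : b.rel p q) (hd : ¬ x.rel p q) : DowlingElt n r where
  zero := x.zero
  rel := mrel x p q
  lab := mlab x b p q
  rel_compl i j h := mrel_compl h
  rel_refl i hi := Or.inl (x.rel_refl i hi)
  rel_symm i j h := mrel_symm h
  rel_trans i j k h h' := mrel_trans hd h h'
  lab_root i j := by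
    unfold mlab
    split
    · exact x.lab_root i j
    split
    · exact b.lab_root i j
    · exact one_pow r
  lab_one i j h := by
    unfold mlab
    rw [if_neg (fun hx => h (Or.inl hx)), if_neg (fun hh => h (Or.inr hh))]
  lab_refl i := by
    unfold mlab
    by_cases hx : x.rel i i
    · rw [if_pos hx]; exact x.lab_refl i
    · rw [if_neg hx, if_neg ?_]
      rintro (⟨h1, h2⟩ | ⟨h1, h2⟩)
      · exact hd (x.rel_trans p i q h1 (x.rel_symm q i h2))
      · exact hd (x.rel_trans p i q h2 (x.rel_symm q i h1))
  lab_symm i j h := by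
    by_cases hi : i ∈ b.zero
    · obtain ⟨hx, hj⟩ := mrel_zero hxb hpq h hi
      rw [mlab_eq_x hxb hpq h hi, mlab_eq_x hxb hpq (mrel_symm h) hj]
      exact x.lab_symm i j hx
    · have hbr : b.rel i j := mrel_brel hxb hpq h hi
      have hj : j ∉ b.zero := rel_right hbr
      rw [mlab_eq_b hxb hpq h hi, mlab_eq_b hxb hpq (mrel_symm h) hj]
      exact b.lab_symm i j hbr
  lab_cocycle i j k h h' := by
    by_cases hi : i ∈ b.zero
    · obtain ⟨hx, hj⟩ := mrel_zero hxb hpq h hi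
      obtain ⟨hx', hk⟩ := mrel_zero hxb hpq h' hj
      rw [mlab_eq_x hxb hpq h hi, mlab_eq_x hxb hpq h' hj,
        mlab_eq_x hxb hpq (mrel_trans hd h h') hi]
      exact x.lab_cocycle i j k hx hx'
    · have hbr : b.rel i j := mrel_brel hxb hpq h hi
      have hj : j ∉ b.zero := rel_right hbr
      have hbr' : b.rel j k := mrel_brel hxb hpq h' hj
      rw [mlab_eq_b hxb hpq h hi, mlab_eq_b hxb hpq h' hj,
        mlab_eq_b hxb hpq (mrel_trans hd h h') hi]
      exact b.lab_cocycle i j k hbr hbr'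

lemma le_mergeAt (hxb : x ≤ b) (hpq : b.rel p q) (hd : ¬ x.rel p q) :
    x ≤ mergeAt hxb hpq hd := by
  refine ⟨subset_rfl, fun i j h => Or.inr ⟨Or.inl h, ?_⟩⟩
  show mlab x b p q i j = x.lab i j
  unfold mlab
  rw [if_pos h]

lemma mergeAt_le (hxb : x ≤ b) (hpq : b.rel p q) (hd : ¬ x.rel p q) :
    mergeAt hxb hpq hd ≤ b := by
  refine ⟨hxb.1, fun i j h => ?_⟩
  by_cases hi : i ∈ b.zero
  · exact Or.inl ⟨hi, (mrel_zero hxb hpq h hi).2⟩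
  · exact Or.inr ⟨mrel_brel hxb hpq h hi, (mlab_eq_b hxb hpq h hi).symm⟩

lemma lt_mergeAt (hxb : x ≤ b) (hpq : b.rel p q) (hd : ¬ x.rel p q)
    (hp : p ∉ x.zero) (hq : q ∉ x.zero) : x < mergeAt hxb hpq hd := by
  refine lt_iff_le_not_ge.2 ⟨le_mergeAt hxb hpq hd, fun h => ?_⟩
  have hm : mrel x p q p q := Or.inr (Or.inl ⟨x.rel_refl p hp, x.rel_refl q hq⟩)
  rcases h.2 p q hm with ⟨hz, _⟩ | ⟨hr, _⟩
  · exact hp hz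
  · exact hd hr

lemma not_mrel_of {i' j' : Fin n} (hx : ¬ x.rel i' j')
    (h1 : ¬ (x.rel p i' ∧ x.rel q j')) (h2 : ¬ (x.rel q i' ∧ x.rel p j')) :
    ¬ mrel x p q i' j' := by
  rintro (h | h | h)
  · exact hx h
  · exact h1 h
  · exact h2 h

lemma DDiv_mergeAt {d : ℕ} (hxd : DDiv d x) (hxb : x ≤ b) (hpq : b.rel p q)
    (hd : ¬ x.rel p q) (hp : p ∉ x.zero) (hq : q ∉ x.zero) :
    DDiv d (mergeAt hxb hpq hd) := by
  intro i hi
  have hdisj : ∀ t, ¬ (x.rel p t ∧ x.rel q t) := fun t ⟨h1, h2⟩ =>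
    hd (x.rel_trans p t q h1 (x.rel_symm q t h2))
  have hdvd : ∀ t, t ∉ x.zero → d ∣ (x.fblock t).card := fun t ht => by
    rw [← card_subtype_eq_fblock_card]; exact hxd t ht
  by_cases hP : x.rel p i
  · have hiff : ∀ j, (mergeAt hxb hpq hd).rel i j ↔ j ∈ x.fblock i ∪ x.fblock q := by
      intro j
      simp only [Finset.mem_union, mem_fblock]
      constructor
      · rintro (h | ⟨h1, h2⟩ | ⟨h1, h2⟩)
        · exact Or.inl h
        · exact Or.inr h2
        · exact absurd ⟨hP, h1⟩ (hdisj i)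
      · rintro (h | h)
        · exact Or.inl h
        · exact Or.inr (Or.inl ⟨hP, h⟩)
    have hdisj2 : Disjoint (x.fblock i) (x.fblock q) :=
      Finset.disjoint_left.2 fun t ht htq =>
        hdisj i ⟨hP, x.rel_trans q t i (mem_fblock.1 htq) (x.rel_symm i t (mem_fblock.1 ht))⟩
    rw [natcard_subtype hiff, Finset.card_union_of_disjoint hdisj2]
    exact Nat.dvd_add (hdvd i hi) (hdvd q hq)
  · by_cases hQ : x.rel q i
    · have hiff : ∀ j, (mergeAt hxb hpq hd).rel i j ↔ j ∈ x.fblock i ∪ x.fblock p := by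
        intro j
        simp only [Finset.mem_union, mem_fblock]
        constructor
        · rintro (h | ⟨h1, h2⟩ | ⟨h1, h2⟩)
          · exact Or.inl h
          · exact absurd ⟨h1, hQ⟩ (hdisj i)
          · exact Or.inr h2
        · rintro (h | h)
          · exact Or.inl h
          · exact Or.inr (Or.inr ⟨hQ, h⟩)
      have hdisj2 : Disjoint (x.fblock i) (x.fblock p) :=
        Finset.disjoint_left.2 fun t ht htp =>
          hdisj i ⟨x.rel_trans p t i (mem_fblock.1 htp) (x.rel_symm i t (mem_fblock.1 ht)), hQ⟩
      rw [natcard_subtype hiff, Finset.card_union_of_disjoint hdisj2]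
      exact Nat.dvd_add (hdvd i hi) (hdvd p hp)
    · have hiff : ∀ j, (mergeAt hxb hpq hd).rel i j ↔ j ∈ x.fblock i := by
        intro j
        simp only [mem_fblock]
        constructor
        · rintro (h | ⟨h1, h2⟩ | ⟨h1, h2⟩)
          · exact h
          · exact absurd h1 hP
          · exact absurd h1 hQ
        · exact fun h => Or.inl h
      rw [natcard_subtype hiff]
      exact hdvd i hi

end Merge

end DowlingElt

noncomputable section
open Classical

namespace DowlingElt

variable {n r : ℕ}

/-- Labelled reachability through the elements of `S`. -/
inductive Lab (S : Set (DowlingElt n r)) : Fin n → Fin n → ℂ → Prop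
  | refl (i : Fin n) : Lab S i i 1
  | tail {i j k : Fin n} {c : ℂ} {x : DowlingElt n r} :
      Lab S i j c → x ∈ S → x.rel j k → Lab S i k (c * x.lab j k)

namespace Lab

variable {S : Set (DowlingElt n r)}

lemma append {i j k : Fin n} {c c' : ℂ} (h : Lab S i j c) (h' : Lab S j k c') :
    Lab S i k (c * c') := by
  induction h' with
  | refl => simpa using h
  | tail h1 hx hr ih =>
    rw [← mul_assoc]
    exact (ih).tail hx hr

lemma single {x : DowlingElt n r} (hx : x ∈ S) {i j : Fin n} (h : x.rel i j) :
    Lab S i j (x.lab i j) := by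
  simpa using (Lab.refl i).tail hx h

lemma ne_zero {i j : Fin n} {c : ℂ} (h : Lab S i j c) : c ≠ 0 := by
  induction h with
  | refl => exact one_ne_zero
  | tail h1 hx hr ih =>
    refine mul_ne_zero ih fun hz => ?_
    have := DowlingElt.lab_symm _ _ _ hr
    rw [hz, zero_mul] at this
    exact zero_ne_one this

lemma root {i j : Fin n} {c : ℂ} (h : Lab S i j c) : c ^ r = 1 := by
  induction h with
  | refl => exact one_pow r
  | tail h1 hx hr ih =>
    rw [mul_pow, ih, DowlingElt.lab_root, one_mul]

lemma symm {i j : Fin n} {c : ℂ} (h : Lab S i j c) : Lab S j i c⁻¹ := by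
  induction h with
  | refl => simpa using Lab.refl i
  | @tail j k c x h1 hx hr ih =>
    have hlab : x.lab k j = (x.lab j k)⁻¹ :=
      eq_inv_of_mul_eq_one_left (by
        rw [mul_comm]; exact x.lab_symm j k hr)
    have h2 : Lab S k j (x.lab j k)⁻¹ := by
      rw [← hlab]
      exact single hx (x.rel_symm j k hr)
    have := h2.append ih
    rw [mul_inv_rev]
    exact this
end Lab

/-- A point whose connected component meets no zero block and has consistent labels. -/
def Good (S : Set (DowlingElt n r)) (i : Fin n) : Prop :=
  (∀ j c, Lab S i j c → ∀ x ∈ S, j ∉ x.zero) ∧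
  (∀ j c c', Lab S i j c → Lab S i j c' → c = c')

lemma Good.trans {S : Set (DowlingElt n r)} {i j : Fin n} {c : ℂ}
    (hg : Good S i) (h : Lab S i j c) : Good S j := by
  constructor
  · intro k c' hk x hx
    exact hg.1 k (c * c') (h.append hk) x hx
  · intro k a a' h1 h2
    have e1 := hg.2 k (c * a) (c * a') (h.append h1) (h.append h2)
    exact mul_left_cancel₀ h.ne_zero e1

lemma Good.trans' {S : Set (DowlingElt n r)} {i j : Fin n} {c : ℂ}
    (hg : Good S j) (h : Lab S i j c) : Good S i :=
  hg.trans h.symm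

/-- The join of a set of Dowling elements. -/
def djoin (S : Set (DowlingElt n r)) : DowlingElt n r where
  zero := {i | ¬ Good S i}
  rel i j := Good S i ∧ ∃ c, Lab S i j c
  lab i j := if h : Good S i ∧ ∃ c, Lab S i j c then h.2.choose else 1
  rel_compl i j h := by
    obtain ⟨hg, c, hc⟩ := h
    exact ⟨fun hh => hh hg, fun hh => hh (hg.trans hc)⟩
  rel_refl i hi := ⟨not_not.1 hi, 1, Lab.refl i⟩
  rel_symm i j h := by
    obtain ⟨hg, c, hc⟩ := h
    exact ⟨hg.trans hc, c⁻¹, hc.symm⟩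
  rel_trans i j k h h' := by
    obtain ⟨hg, c, hc⟩ := h
    obtain ⟨hg', c', hc'⟩ := h'
    exact ⟨hg, c * c', hc.append hc'⟩
  lab_root i j := by
    split
    · next h => exact h.2.choose_spec.root
    · exact one_pow r
  lab_one i j h := dif_neg h
  lab_refl i := by
    split
    · next h => exact h.1.2 i _ 1 h.2.choose_spec (Lab.refl i)
    · rfl
  lab_symm i j h := by
    rw [dif_pos h, dif_pos (show Good S j ∧ ∃ c, Lab S j i c from
      ⟨h.1.trans h.2.choose_spec, h.2.choose⁻¹, h.2.choose_spec.symm⟩)]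
    set c := h.2.choose with hc
    have hlc : Lab S i j c := h.2.choose_spec
    have hg' : Good S j := h.1.trans hlc
    have h' : Good S j ∧ ∃ c, Lab S j i c := ⟨hg', c⁻¹, hlc.symm⟩
    have : h'.2.choose = c⁻¹ := hg'.2 i _ _ h'.2.choose_spec hlc.symm
    rw [this]
    exact mul_inv_cancel₀ hlc.ne_zero
  lab_cocycle i j k h h' := by
    have hik : Good S i ∧ ∃ c, Lab S i k c :=
      ⟨h.1, h.2.choose * h'.2.choose, h.2.choose_spec.append h'.2.choose_spec⟩
    rw [dif_pos h, dif_pos h', dif_pos hik]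
    exact h.1.2 k _ _ hik.2.choose_spec (h.2.choose_spec.append h'.2.choose_spec)

lemma le_djoin {S : Set (DowlingElt n r)} {x : DowlingElt n r} (hx : x ∈ S) :
    x ≤ djoin S := by
  constructor
  · intro i hi hg
    exact hg.1 i 1 (Lab.refl i) x hx hi
  · intro i j h
    by_cases hg : Good S i
    · refine Or.inr ⟨⟨hg, x.lab i j, Lab.single hx h⟩, ?_⟩
      show (djoin S).lab i j = x.lab i j
      have hm : Good S i ∧ ∃ c, Lab S i j c := ⟨hg, x.lab i j, Lab.single hx h⟩
      show dite _ _ _ = x.lab i j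
      rw [dif_pos hm]
      exact hg.2 j _ _ hm.2.choose_spec (Lab.single hx h)
    · refine Or.inl ⟨hg, fun hg' => hg (hg'.trans' (Lab.single hx h))⟩

lemma djoin_le {S : Set (DowlingElt n r)} {w : DowlingElt n r}
    (hw : ∀ x ∈ S, x ≤ w) : djoin S ≤ w := by
  have claim : ∀ i, i ∉ w.zero → ∀ j c, Lab S i j c → w.rel i j ∧ w.lab i j = c := by
    intro i hi j c h
    induction h with
    | refl => exact ⟨w.rel_refl i hi, w.lab_refl i⟩
    | @tail j k c x h1 hx hr ih =>
      obtain ⟨hwr, hwl⟩ := ih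
      rcases (hw x hx).2 j k hr with ⟨hz, _⟩ | ⟨hr', hl'⟩
      · exact absurd hz (rel_right hwr)
      · exact ⟨w.rel_trans i j k hwr hr',
          by rw [w.lab_cocycle i j k hwr hr', hwl, hl']⟩
  have claim2 : ∀ i, i ∈ w.zero → ∀ j c, Lab S i j c → j ∈ w.zero := by
    intro i hi j c h
    induction h with
    | refl => exact hi
    | @tail j k c x h1 hx hr ih =>
      rcases (hw x hx).2 j k hr with ⟨_, hz⟩ | ⟨hr', _⟩
      · exact hz
      · exact absurd ih (rel_left hr')
  constructor
  · intro i hi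
    by_contra hwz
    refine hi ⟨fun j c hl x hx hj => ?_, fun j c c' h1 h2 => ?_⟩
    · exact rel_right (claim i hwz j c hl).1 ((hw x hx).1 hj)
    · rw [← (claim i hwz j c h1).2, (claim i hwz j c' h2).2]
  · intro i j h
    obtain ⟨hg, hc⟩ := h
    by_cases hi : i ∈ w.zero
    · exact Or.inl ⟨hi, claim2 i hi j hc.choose hc.choose_spec⟩
    · obtain ⟨hwr, hwl⟩ := claim i hi j hc.choose hc.choose_spec
      refine Or.inr ⟨hwr, ?_⟩
      show w.lab i j = dite _ _ _
      rw [dif_pos (⟨hg, hc⟩ : Good S i ∧ ∃ c, Lab S i j c)]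
      rw [hwl]

end DowlingElt

noncomputable section
open Classical Finset

namespace DowlingElt

variable {n r d : ℕ}

/-- A minimal `d`-divisible element has exactly `n / d` blocks. -/
lemma atom_card (hd : 0 < d) {b : DowlingElt n r} (hbd : DDiv d b)
    (hmin : ∀ z : DowlingElt n r, DDiv d z → ¬ z < b) : b.bfin.card = n / d := by
  -- the zero block has fewer than `d` elements
  have hzfin : b.zero.Finite := Set.toFinite _
  have hzlt : Set.ncard b.zero < d := by
    by_contra hge
    push_neg at hge
    rw [Set.ncard_eq_toFinset_card' ] at hge
    obtain ⟨N, hNsub, hNcard⟩ := Finset.exists_subset_card_eq hge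
    have hNz : ↑N ⊆ b.zero := by
      intro t ht
      have := hNsub ht
      simpa using this
    have hne : N.Nonempty := Finset.card_pos.1 (hNcard ▸ hd)
    exact hmin _ (DDiv_carve hbd N hNz hNcard) (carve_lt b N hNz hne)
  -- every block has exactly `d` elements
  have hball : ∀ B ∈ b.bfin, B.card = d := by
    intro B hB
    obtain ⟨i₀, hi₀, rfl⟩ := mem_bfin.1 hB
    have hdvd : d ∣ (b.fblock i₀).card := blocks_card_dvd hbd hB
    have hpos : 0 < (b.fblock i₀).card :=
      Finset.card_pos.2 ⟨i₀, self_mem_fblock hi₀⟩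
    rcases lt_or_eq_of_le (Nat.le_of_dvd hpos hdvd) with hlt | heq
    · exfalso
      obtain ⟨N, hNsub, hNcard⟩ := Finset.exists_subset_card_eq hlt.le
      have hne : N.Nonempty := Finset.card_pos.1 (hNcard ▸ hd)
      have hssub : N ⊂ b.fblock i₀ :=
        hNsub.ssubset_of_ne (fun h => by rw [h] at hNcard; omega)
      obtain ⟨u, hu, huN⟩ := Finset.exists_of_ssubset hssub
      obtain ⟨t, ht⟩ := hne
      exact hmin _ (DDiv_split hbd hNsub hNcard) (split_lt b hNsub ht hu huN)
    · exact heq.symm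
  -- counting
  have h1 : b.nzs.card = d * b.bfin.card := nzs_card_eq b hball
  have h2 : b.nzs.card + Set.ncard b.zero = n := nzs_card_add b
  have h4 : (d * b.bfin.card + Set.ncard b.zero) / d = b.bfin.card := by
    rw [Nat.mul_add_div hd, Nat.div_eq_of_lt hzlt, Nat.add_zero]
  rw [← h4]
  congr 1
  omega

lemma exists_not_mem_of_card_lt {α : Type*} {s t : Finset α} (h : s.card < t.card) :
    ∃ C ∈ t, C ∉ s := by
  by_contra hcon
  push_neg at hcon
  exact absurd (Finset.card_le_card hcon) (not_le.2 h)

/-- If the block counts differ by at least 2 across `x ≤ y`, there is a strictly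
intermediate `d`-divisible element. -/
lemma exists_mid {x y : DowlingElt n r} (hxy : x ≤ y) (hxd : DDiv d x)
    (hc : y.bfin.card + 2 ≤ x.bfin.card) :
    ∃ z : DowlingElt n r, DDiv d z ∧ x < z ∧ z < y := by
  set Abs := x.bfin.filter (fun C => ∀ t ∈ C, t ∈ y.zero) with hAbs
  set rest := x.bfin.filter (fun C => ¬ ∀ t ∈ C, t ∈ y.zero) with hrest
  set img := y.bfin.image (repmap x) with himg
  have himgsub : img ⊆ rest := fun C hC => by
    obtain ⟨B, hB, rfl⟩ := Finset.mem_image.1 hC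
    exact repmap_mem_rest hxy hB
  have himgcard : img.card = y.bfin.card := Finset.card_image_of_injOn (repmap_injOn hxy)
  have hsplitc : Abs.card + rest.card = x.bfin.card := by
    rw [hAbs, hrest]
    exact Finset.card_filter_add_card_filter_not _
  -- helper: from an element of `rest \ img`, extract a mergeable pair
  have hwitness : ∀ C ∈ rest, C ∉ img → ∃ t c : Fin n, C = x.fblock t ∧
      x.fblock c ∈ img ∧ y.rel t c ∧ ¬ x.rel t c ∧ t ∉ x.zero ∧ c ∉ x.zero ∧
      t ∉ y.zero ∧ c ∉ y.zero := by
    intro C hC hCimg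
    obtain ⟨hCb, hCny⟩ := Finset.mem_filter.1 hC
    push_neg at hCny
    obtain ⟨t, htC, hty⟩ := hCny
    obtain ⟨htx, hCt⟩ := mem_of_mem_bfin hCb htC
    have hBb : y.fblock t ∈ y.bfin := mem_bfin.2 ⟨t, hty, rfl⟩
    obtain ⟨c, hcB, hcy, hcx, hrm, hsub, hcm, hmem⟩ := repmap_spec hxy hBb
    have hrelyc : y.rel t c := mem_fblock.1 hcB
    have hCc : x.fblock c ∈ img := by
      rw [← hrm]
      exact Finset.mem_image_of_mem _ hBb
    refine ⟨t, c, hCt, hCc, hrelyc, fun hxr => ?_, htx, hcx, hty, hcy⟩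
    · exact hCimg (by rw [hCt, fblock_eq_of_rel hxr, ← hrm]; exact Finset.mem_image_of_mem _ hBb)
  by_cases habs2 : 2 ≤ Abs.card
  · -- two absorbed blocks: absorb one, witness the other
    obtain ⟨C₁, hC₁, C₂, hC₂, hne⟩ := Finset.one_lt_card.1 habs2
    obtain ⟨hC₁b, hC₁z⟩ := Finset.mem_filter.1 hC₁
    obtain ⟨hC₂b, hC₂z⟩ := Finset.mem_filter.1 hC₂
    obtain ⟨t₁, ht₁x, rfl⟩ := mem_bfin.1 hC₁b
    obtain ⟨t₂, ht₂x, rfl⟩ := mem_bfin.1 hC₂b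
    refine ⟨x.absorb t₁, DDiv_absorb hxd t₁, lt_absorb x ht₁x, ?_⟩
    refine lt_iff_le_not_ge.2 ⟨absorb_le hxy (fun k hk => hC₁z k (mem_fblock.2 hk)), fun hyz => ?_⟩
    have ht₂z : t₂ ∈ y.zero := hC₂z t₂ (self_mem_fblock ht₂x)
    have := hyz.1 ht₂z
    rcases this with h | h
    · exact ht₂x h
    · exact hne (fblock_eq_of_rel h)
  · have habs1 : Abs.card ≤ 1 := by omega
    have hrestimg : img.card + 1 ≤ rest.card := by omega
    obtain ⟨C, hCrest, hCimg⟩ :=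
      exists_not_mem_of_card_lt (show img.card < rest.card by omega)
    obtain ⟨t, c, hCt, hCcimg, hyrel, hnx, htx, hcx, hty, hcy⟩ := hwitness C hCrest hCimg
    by_cases habs : Abs.Nonempty
    · -- absorb the unique absorbed block, witness pair (t, c)
      obtain ⟨C₁, hC₁⟩ := habs
      obtain ⟨hC₁b, hC₁z⟩ := Finset.mem_filter.1 hC₁
      obtain ⟨t₁, ht₁x, rfl⟩ := mem_bfin.1 hC₁b
      refine ⟨x.absorb t₁, DDiv_absorb hxd t₁, lt_absorb x ht₁x, ?_⟩
      refine lt_iff_le_not_ge.2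
        ⟨absorb_le hxy (fun k hk => hC₁z k (mem_fblock.2 hk)), fun hyz => ?_⟩
      have htz : t ∉ (x.absorb t₁).zero := by
        rintro (h | h)
        · exact htx h
        · have hCC : C = x.fblock t₁ := by rw [hCt, ← fblock_eq_of_rel h]
          exact (Finset.mem_filter.1 hCrest).2 (by rw [hCC]; exact hC₁z)
      rcases hyz.2 t c hyrel with ⟨hz, _⟩ | ⟨hr, _⟩
      · exact htz hz
      · have hr' : x.rel t c ∧ ¬ x.rel t₁ t := hr
        exact hnx hr'.1
    · -- no absorbed blocks: two independent mergeable pairs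
      have h2 : img.card + 2 ≤ rest.card := by
        have h0 : Abs.card = 0 := by
          rw [Finset.card_eq_zero]
          exact Finset.not_nonempty_iff_eq_empty.1 habs
        omega
      have hins : (insert C img).card < rest.card :=
        lt_of_le_of_lt (Finset.card_insert_le _ _) (by omega)
      obtain ⟨C₂, hC₂rest, hC₂ni⟩ := exists_not_mem_of_card_lt hins
      have hC₂ne : C₂ ≠ C := fun h => hC₂ni (h ▸ Finset.mem_insert_self _ _)
      have hC₂nimg : C₂ ∉ img := fun h => hC₂ni (Finset.mem_insert_of_mem h)
      obtain ⟨t₂, c₂, hC₂t, hC₂cimg, hyrel₂, hnx₂, ht₂x, hc₂x, ht₂y, hc₂y⟩ :=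
        hwitness C₂ hC₂rest hC₂nimg
      refine ⟨mergeAt hxy hyrel hnx, DDiv_mergeAt hxd hxy hyrel hnx htx hcx,
        lt_mergeAt hxy hyrel hnx htx hcx,
        lt_iff_le_not_ge.2 ⟨mergeAt_le hxy hyrel hnx, fun hyz => ?_⟩⟩
      rcases hyz.2 t₂ c₂ hyrel₂ with ⟨hz, _⟩ | ⟨hr, _⟩
      · exact ht₂x hz
      · refine not_mrel_of ?_ ?_ ?_ hr
        · exact hnx₂
        · rintro ⟨h1, h2⟩
          exact hC₂ne (by rw [hC₂t, ← fblock_eq_of_rel h1, ← hCt])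
        · rintro ⟨h1, h2⟩
          exact hC₂nimg (by rw [hC₂t, ← fblock_eq_of_rel h1]; exact hCcimg)
end DowlingElt


open DowlingElt

/-- The `d`-divisible Dowling lattice `Q_n(r, d)` is a pure lattice with
rank function `rk (I, π, γ) = ⌊n/d⌋ + 1 - |π|` (and `rk 0̂ = 0`): the rank function
increases by exactly one along covering relations, and any two elements have a least upper
bound and a greatest lower bound. -/
theorem QnRD_pure_lattice (n r d : ℕ) (hd : 0 < d) :
    (∀ x y : QnRD n r d, x ⋖ y → rkd d y = rkd d x + 1) ∧
    rkd d (⊥ : QnRD n r d) = 0 ∧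
    (∀ x y : QnRD n r d, ∃ z, IsLUB {x, y} z) ∧
    (∀ x y : QnRD n r d, ∃ z, IsGLB {x, y} z) := by
  classical
  refine ⟨?_, rfl, ?_, ?_⟩
  · -- covering relations raise the rank by one
    intro x y hcov
    induction y using WithBot.recBotCoe with
    | bot => exact absurd hcov.1 not_lt_bot
    | coe b =>
      induction x using WithBot.recBotCoe with
      | bot =>
        have hmin : ∀ z : DowlingElt n r, DDiv d z → ¬ z < b.val := by
          intro z hz hlt
          exact hcov.2 (WithBot.bot_lt_coe (⟨z, hz⟩ : {x : DowlingElt n r // DDiv d x}))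
            (WithBot.coe_lt_coe.2 (show (⟨z, hz⟩ : {x : DowlingElt n r // DDiv d x}) < b
              from hlt))
        have hb := atom_card hd b.2 hmin
        show ((n / d : ℕ) : ℤ) + 1 - (nblocks b.val : ℤ) = 0 + 1
        rw [nblocks_eq_bfin_card, hb]
        ring
      | coe a =>
        have hab0 : a < b := WithBot.coe_lt_coe.1 hcov.1
        have hab : a.val < b.val := hab0
        have h1 : b.val.bfin.card < a.val.bfin.card := bfin_lt_of_lt hab
        have h2 : ¬ (b.val.bfin.card + 2 ≤ a.val.bfin.card) := by
          intro hcc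
          obtain ⟨z, hz, h3, h4⟩ := exists_mid hab.le a.2 hcc
          exact hcov.2
            (WithBot.coe_lt_coe.2
              (show a < (⟨z, hz⟩ : {x : DowlingElt n r // DDiv d x}) from h3))
            (WithBot.coe_lt_coe.2
              (show (⟨z, hz⟩ : {x : DowlingElt n r // DDiv d x}) < b from h4))
        show ((n / d : ℕ) : ℤ) + 1 - (nblocks b.val : ℤ) =
          ((n / d : ℕ) : ℤ) + 1 - (nblocks a.val : ℤ) + 1
        rw [nblocks_eq_bfin_card, nblocks_eq_bfin_card]
        have h3 : a.val.bfin.card = b.val.bfin.card + 1 := by omega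
        rw [h3]
        push_cast
        ring
  · -- least upper bounds
    intro x y
    induction x using WithBot.recBotCoe with
    | bot =>
      refine ⟨y, fun s hs => ?_, fun w hw => hw (Set.mem_insert_of_mem _ rfl)⟩
      rcases Set.mem_insert_iff.1 hs with rfl | hs
      · exact bot_le
      · exact le_of_eq (Set.mem_singleton_iff.1 hs)
    | coe a =>
      induction y using WithBot.recBotCoe with
      | bot =>
        refine ⟨↑a, fun s hs => ?_, fun w hw => hw (Set.mem_insert _ _)⟩
        rcases Set.mem_insert_iff.1 hs with rfl | hs
        · exact le_refl _
        · rw [Set.mem_singleton_iff.1 hs]; exact bot_le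
      | coe b =>
        have hmem_a : a.val ∈ ({a.val, b.val} : Set (DowlingElt n r)) := Set.mem_insert _ _
        have hmem_b : b.val ∈ ({a.val, b.val} : Set (DowlingElt n r)) :=
          Set.mem_insert_of_mem _ rfl
        have hjd : DDiv d (djoin {a.val, b.val}) := DDiv_of_le (le_djoin hmem_a) a.2
        refine ⟨↑(⟨djoin {a.val, b.val}, hjd⟩ : {x : DowlingElt n r // DDiv d x}),
          fun s hs => ?_, fun w hw => ?_⟩
        · rcases Set.mem_insert_iff.1 hs with rfl | hs
          · exact WithBot.coe_le_coe.2 ((le_djoin hmem_a))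
          · rw [Set.mem_singleton_iff.1 hs]
            exact WithBot.coe_le_coe.2 ((le_djoin hmem_b))
        · induction w using WithBot.recBotCoe with
          | bot => exact absurd (hw (Set.mem_insert _ _)) (WithBot.not_coe_le_bot _)
          | coe u =>
            refine WithBot.coe_le_coe.2 ((djoin_le ?_))
            rintro s hs
            rcases Set.mem_insert_iff.1 hs with rfl | hs
            · exact (WithBot.coe_le_coe.1 (hw (Set.mem_insert _ _)) : a ≤ u)
            · rw [Set.mem_singleton_iff.1 hs]
              exact (WithBot.coe_le_coe.1 (hw (Set.mem_insert_of_mem _ rfl)) : b ≤ u)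
  · -- greatest lower bounds
    intro x y
    induction x using WithBot.recBotCoe with
    | bot =>
      exact ⟨⊥, fun s hs => bot_le, fun w hw => hw (Set.mem_insert _ _)⟩
    | coe a =>
      induction y using WithBot.recBotCoe with
      | bot =>
        exact ⟨⊥, fun s hs => bot_le, fun w hw => hw (Set.mem_insert_of_mem _ rfl)⟩
      | coe b =>
        by_cases hL : {v : DowlingElt n r | DDiv d v ∧ v ≤ a.val ∧ v ≤ b.val}.Nonempty
        · obtain ⟨v₀, hv₀⟩ := hL
          have hjd : DDiv d (djoin {v : DowlingElt n r | DDiv d v ∧ v ≤ a.val ∧ v ≤ b.val}) :=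
            DDiv_of_le (le_djoin hv₀) hv₀.1
          have hja : djoin {v : DowlingElt n r | DDiv d v ∧ v ≤ a.val ∧ v ≤ b.val} ≤ a.val :=
            djoin_le (fun s hs => hs.2.1)
          have hjb : djoin {v : DowlingElt n r | DDiv d v ∧ v ≤ a.val ∧ v ≤ b.val} ≤ b.val :=
            djoin_le (fun s hs => hs.2.2)
          refine ⟨↑(⟨djoin {v : DowlingElt n r | DDiv d v ∧ v ≤ a.val ∧ v ≤ b.val}, hjd⟩ :
            {x : DowlingElt n r // DDiv d x}), fun s hs => ?_, fun w hw => ?_⟩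
          · rcases Set.mem_insert_iff.1 hs with rfl | hs
            · exact WithBot.coe_le_coe.2 (Subtype.coe_le_coe.1 hja)
            · rw [Set.mem_singleton_iff.1 hs]
              exact WithBot.coe_le_coe.2 (Subtype.coe_le_coe.1 hjb)
          · induction w using WithBot.recBotCoe with
            | bot => exact bot_le
            | coe u =>
              have hu : u.val ∈ {v : DowlingElt n r | DDiv d v ∧ v ≤ a.val ∧ v ≤ b.val} :=
                ⟨u.2, (WithBot.coe_le_coe.1 (hw (Set.mem_insert _ _)) : u ≤ a),
                  (WithBot.coe_le_coe.1 (hw (Set.mem_insert_of_mem _ rfl)) : u ≤ b)⟩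
              exact WithBot.coe_le_coe.2 ((le_djoin hu))
        · refine ⟨⊥, fun s hs => bot_le, fun w hw => ?_⟩
          induction w using WithBot.recBotCoe with
          | bot => exact le_refl _
          | coe u =>
            exact absurd ⟨u.val, u.2,
              (WithBot.coe_le_coe.1 (hw (Set.mem_insert _ _)) : u ≤ a),
              (WithBot.coe_le_coe.1 (hw (Set.mem_insert_of_mem _ rfl)) : u ≤ b)⟩ hL
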